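/- Let ρ : ℝ × ℝ² → ℝ be continuously differentiable, write ρ_t(θ) = ρ(t, θ), and let u : ℝ × ℝ² → ℝ² be continuous with each ρ_t differentiable in θ. Suppose that: (i) for every t ≥ 0 and every θ ∈ ℝ², ∂ρ/∂t(t, θ) + ⟨∇ρ_t(θ), u(t, θ)⟩ = 0; and (ii) for every t ≥ 0, every k ∈ ℤ² and every θ ∈ ℝ², ⟨∇ρ_t(θ), A_k(θ)⟩ = 0 and ⟨∇ρ_t(θ), B_k(θ)⟩ = 0. Then ρ is constant: for every t ≥ 0 and every θ ∈ ℝ², ρ(t, θ) = ρ(0, (0,0)). -/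

import Mathlib

/-- The gradient `(∂₁g θ, ∂₂g θ)` of a function `g : ℝ² → ℝ`. -/
noncomputable def grad2 (g : ℝ × ℝ → ℝ) (θ : ℝ × ℝ) : ℝ × ℝ :=
  (fderiv ℝ g θ (1, 0), fderiv ℝ g θ (0, 1))

/-- The Euclidean inner product on `ℝ²`. -/
def dot2 (a b : ℝ × ℝ) : ℝ := a.1 * b.1 + a.2 * b.2

/-- The divergence-free vector field `A_k (θ) = (k₂ cos (k⬝θ), −k₁ cos (k⬝θ))` on `ℝ²`. -/
noncomputable def fieldA (k : ℤ × ℤ) (θ : ℝ × ℝ) : ℝ × ℝ :=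
  ((k.2 : ℝ) * Real.cos (k.1 * θ.1 + k.2 * θ.2),
    -(k.1 : ℝ) * Real.cos (k.1 * θ.1 + k.2 * θ.2))

/-- The divergence-free vector field `B_k (θ) = (k₂ sin (k⬝θ), −k₁ sin (k⬝θ))` on `ℝ²`. -/
noncomputable def fieldB (k : ℤ × ℤ) (θ : ℝ × ℝ) : ℝ × ℝ :=
  ((k.2 : ℝ) * Real.sin (k.1 * θ.1 + k.2 * θ.2),
    -(k.1 : ℝ) * Real.sin (k.1 * θ.1 + k.2 * θ.2))

/-- Let `ρ : ℝ × ℝ² → ℝ` be continuously differentiable, `ρ_t (θ) = ρ (t, θ)`,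
and let `u : ℝ × ℝ² → ℝ²` be continuous, with each `ρ_t` differentiable in `θ`. Suppose
(i) for every `t ≥ 0` and `θ ∈ ℝ²`, `∂ρ/∂t (t, θ) + ⟨∇ρ_t (θ), u (t, θ)⟩ = 0`, and
(ii) for every `t ≥ 0`, `k ∈ ℤ²` and `θ ∈ ℝ²`, `⟨∇ρ_t (θ), A_k (θ)⟩ = 0` and
`⟨∇ρ_t (θ), B_k (θ)⟩ = 0`. Then `ρ` is constant: `ρ (t, θ) = ρ (0, (0, 0))` for all
`t ≥ 0`, `θ ∈ ℝ²`. -/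
theorem density_constant_on_torus
    (ρ : ℝ × (ℝ × ℝ) → ℝ) (u : ℝ × (ℝ × ℝ) → ℝ × ℝ)
    (hρ : ContDiff ℝ 1 ρ) (hu : Continuous u)
    (hρt : ∀ t : ℝ, Differentiable ℝ (fun θ : ℝ × ℝ => ρ (t, θ)))
    (hi : ∀ t : ℝ, 0 ≤ t → ∀ θ : ℝ × ℝ,
      deriv (fun s : ℝ => ρ (s, θ)) t
        + dot2 (grad2 (fun θ' : ℝ × ℝ => ρ (t, θ')) θ) (u (t, θ)) = 0)
    (hiiA : ∀ t : ℝ, 0 ≤ t → ∀ (k : ℤ × ℤ) (θ : ℝ × ℝ),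
      dot2 (grad2 (fun θ' : ℝ × ℝ => ρ (t, θ')) θ) (fieldA k θ) = 0)
    (hiiB : ∀ t : ℝ, 0 ≤ t → ∀ (k : ℤ × ℤ) (θ : ℝ × ℝ),
      dot2 (grad2 (fun θ' : ℝ × ℝ => ρ (t, θ')) θ) (fieldB k θ) = 0) :
    ∀ t : ℝ, 0 ≤ t → ∀ θ : ℝ × ℝ, ρ (t, θ) = ρ (0, (0, 0)) := by
  -- The spatial gradient vanishes for t ≥ 0.
  have hgrad : ∀ t : ℝ, 0 ≤ t → ∀ θ : ℝ × ℝ,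
      fderiv ℝ (fun θ' : ℝ × ℝ => ρ (t, θ')) θ = 0 := by
    intro t ht θ
    have hA1 := hiiA t ht (0, 1) θ
    have hB1 := hiiB t ht (0, 1) θ
    have hA2 := hiiA t ht (1, 0) θ
    have hB2 := hiiB t ht (1, 0) θ
    simp only [dot2, grad2, fieldA, fieldB] at hA1 hB1 hA2 hB2
    push_cast at hA1 hB1 hA2 hB2
    simp only [zero_mul, one_mul, mul_zero, zero_add, add_zero, neg_zero, neg_mul] at hA1 hB1 hA2 hB2
    set L := fderiv ℝ (fun θ' : ℝ × ℝ => ρ (t, θ')) θ with hL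
    have h1 : L (1, 0) = 0 := by
      have e := Real.sin_sq_add_cos_sq θ.2
      linear_combination Real.cos θ.2 * hA1 + Real.sin θ.2 * hB1 - L (1, 0) * e
    have h2 : L (0, 1) = 0 := by
      have e := Real.sin_sq_add_cos_sq θ.1
      linear_combination -Real.cos θ.1 * hA2 - Real.sin θ.1 * hB2 - L (0, 1) * e
    refine ContinuousLinearMap.ext fun v => ?_
    have hv : (v : ℝ × ℝ) = v.1 • ((1 : ℝ), (0 : ℝ)) + v.2 • ((0 : ℝ), (1 : ℝ)) := by
      simp [Prod.ext_iff]
    rw [hv, map_add, map_smul, map_smul, h1, h2]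
    simp
  intro t ht θ
  -- spatial constancy at time t
  have hspace : ρ (t, θ) = ρ (t, ((0 : ℝ), (0 : ℝ))) := by
    have := is_const_of_fderiv_eq_zero (hρt t) (hgrad t ht) θ ((0 : ℝ), (0 : ℝ))
    exact this
  -- time constancy at θ₀ = (0,0)
  have hdiff : ∀ θ₀ : ℝ × ℝ, Differentiable ℝ (fun s : ℝ => ρ (s, θ₀)) := by
    intro θ₀
    exact (hρ.differentiable one_ne_zero).comp (differentiable_id.prodMk (differentiable_const θ₀))
  have hderiv0 : ∀ s : ℝ, 0 ≤ s →
      deriv (fun s : ℝ => ρ (s, ((0 : ℝ), (0 : ℝ)))) s = 0 := by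
    intro s hs
    have h := hi s hs ((0 : ℝ), (0 : ℝ))
    have hg : grad2 (fun θ' : ℝ × ℝ => ρ (s, θ')) ((0 : ℝ), (0 : ℝ)) = 0 := by
      simp [grad2, hgrad s hs]
    rw [hg] at h
    simpa [dot2] using h
  have htime : ρ (t, ((0 : ℝ), (0 : ℝ))) = ρ (0, ((0 : ℝ), (0 : ℝ))) := by
    have hconst := constant_of_has_deriv_right_zero
      (f := fun s : ℝ => ρ (s, ((0 : ℝ), (0 : ℝ)))) (a := 0) (b := t)
      ((hdiff _).continuous.continuousOn)
      (fun x hx => by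
        have : HasDerivAt (fun s : ℝ => ρ (s, ((0 : ℝ), (0 : ℝ)))) 0 x := by
          have := (hdiff ((0 : ℝ), (0 : ℝ)) x).hasDerivAt
          rwa [hderiv0 x hx.1] at this
        exact this.hasDerivWithinAt)
    exact hconst t ⟨ht, le_rfl⟩
  rw [hspace, htime]
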